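/- Define F : ℝ^d → ℝ by F(w) = (1/2)‖w‖₀ + (1/2)‖w‖₂², where ‖w‖₀ is the number of nonzero coordinates of w, and define the Berhu penalty Θ(w) = Σ_{i=1}^d θ(w_i), where θ(t) = |t| if |t| ≤ 1 and θ(t) = (t² + 1)/2 if |t| > 1. Then Θ is the convex envelope of F: (i) Θ is convex on ℝ^d; (ii) Θ(w) ≤ F(w) for all w ∈ ℝ^d; (iii) every convex function g : ℝ^d → ℝ with g(w) ≤ F(w) for all w satisfies g(w) ≤ Θ(w) for all w. -/

import Mathlib

open scoped BigOperators

/-- The Berhu penalty in one coordinate. -/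
noncomputable def berhu (t : ℝ) : ℝ := if |t| ≤ 1 then |t| else (t ^ 2 + 1) / 2

lemma berhu_eq (t : ℝ) : berhu t = |t| + (max (|t| - 1) 0) ^ 2 / 2 := by
  unfold berhu
  rcases le_or_gt |t| 1 with h | h
  · rw [if_pos h, max_eq_right (by linarith), ]
    ring
  · rw [if_neg (not_le.2 h), max_eq_left (by linarith)]
    have : |t| ^ 2 = t ^ 2 := sq_abs t
    nlinarith [abs_nonneg t]

lemma berhu_convex : ConvexOn ℝ Set.univ berhu := by
  have h1 : ConvexOn ℝ Set.univ (fun t : ℝ => |t|) :=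
    ⟨convex_univ, fun x _ y _ a b ha hb hab => by
      calc |a • x + b • y| ≤ |a • x| + |b • y| := abs_add_le _ _
        _ = a • |x| + b • |y| := by
            simp [abs_mul, abs_of_nonneg ha, abs_of_nonneg hb]⟩
  have h1' : ConvexOn ℝ Set.univ (fun t : ℝ => |t| - 1) := by
    have := h1.add (convexOn_const (-1:ℝ) convex_univ)
    exact this.congr (fun t _ => by simp only [Pi.add_apply]; ring)
  have h2 : ConvexOn ℝ Set.univ (fun t : ℝ => max (|t| - 1) 0) := by
    have := h1'.sup (convexOn_const (0:ℝ) convex_univ)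
    simpa [Pi.sup_def] using this
  have h3 : ConvexOn ℝ Set.univ ((fun t : ℝ => max (|t| - 1) 0) ^ 2) :=
    h2.pow (fun x _ => le_max_right _ _) 2
  have h4 : ConvexOn ℝ Set.univ (fun t : ℝ => |t| + (max (|t| - 1) 0) ^ 2 / 2) := by
    have := h1.add (h3.smul (by norm_num : (0:ℝ) ≤ 1/2))
    exact this.congr (fun t _ => by
      simp only [Pi.add_apply, Pi.smul_apply, Pi.pow_apply, smul_eq_mul]; ring)
  exact h4.congr (fun t _ => (berhu_eq t).symm)

lemma berhu_nonneg (t : ℝ) : 0 ≤ berhu t := by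
  rw [berhu_eq]; positivity

lemma berhu_zero : berhu 0 = 0 := by simp [berhu]

lemma berhu_le (t : ℝ) (ht : t ≠ 0) : berhu t ≤ 1/2 + (1/2) * t ^ 2 := by
  unfold berhu
  rcases le_or_gt |t| 1 with h | h
  · rw [if_pos h]
    nlinarith [sq_abs t, abs_nonneg t]
  · rw [if_neg (not_le.2 h)]
    ring_nf
    nlinarith

lemma berhu_of_good (t : ℝ) (h : t = 0 ∨ 1 ≤ |t|) :
    berhu t = (if t ≠ 0 then (1:ℝ) else 0) / 2 + (1/2) * t ^ 2 := by
  rcases h with h | h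
  · simp [h, berhu_zero]
  · have ht : t ≠ 0 := by rintro rfl; norm_num at h
    rcases lt_or_eq_of_le h with h' | h'
    · rw [berhu, if_neg (not_le.2 h'), if_pos ht]; ring
    · rw [berhu, if_pos h'.ge, if_pos ht]
      nlinarith [sq_abs t]

lemma sum_berhu_update {d : ℕ} (w : Fin d → ℝ) (a : Fin d) (v : ℝ) :
    ∑ i, berhu (Function.update w a v i) = ∑ i, berhu (w i) - berhu (w a) + berhu v := by
  have h1 : ∑ i ∈ Finset.univ.erase a, berhu (Function.update w a v i)
      = ∑ i ∈ Finset.univ.erase a, berhu (w i) :=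
    Finset.sum_congr rfl fun i hi => by
      rw [Function.update_of_ne (Finset.ne_of_mem_erase hi)]
  rw [← Finset.add_sum_erase _ (fun i => berhu (Function.update w a v i)) (Finset.mem_univ a),
    ← Finset.add_sum_erase _ (fun i => berhu (w i)) (Finset.mem_univ a),
    h1, Function.update_self]
  ring

theorem stmt_19 {d : ℕ}
    (F : (Fin d → ℝ) → ℝ)
    (hF : ∀ w : Fin d → ℝ,
      F w = (1 / 2) * ((Finset.univ.filter (fun i => w i ≠ 0)).card : ℝ)
          + (1 / 2) * ∑ i, (w i) ^ 2)
    (Θ : (Fin d → ℝ) → ℝ) (hΘ : ∀ w : Fin d → ℝ, Θ w = ∑ i, berhu (w i)) :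
    ConvexOn ℝ Set.univ Θ ∧
    (∀ w : Fin d → ℝ, Θ w ≤ F w) ∧
    (∀ g : (Fin d → ℝ) → ℝ, ConvexOn ℝ Set.univ g → (∀ w, g w ≤ F w) →
      ∀ w, g w ≤ Θ w) := by
  -- F pointwise as a sum
  have hF' : ∀ w : Fin d → ℝ,
      F w = ∑ i, ((if w i ≠ 0 then (1:ℝ) else 0) / 2 + (1/2) * (w i) ^ 2) := by
    intro w
    have hcard : ((Finset.univ.filter (fun i => w i ≠ 0)).card : ℝ)
        = ∑ i, (if w i ≠ 0 then (1:ℝ) else 0) := by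
      rw [Finset.sum_ite, Finset.sum_const, Finset.sum_const]
      simp
    rw [hF w, hcard, Finset.mul_sum, Finset.mul_sum, ← Finset.sum_add_distrib]
    exact Finset.sum_congr rfl fun i _ => by ring
  constructor
  · -- convexity
    have : ConvexOn ℝ Set.univ (fun w : Fin d → ℝ => ∑ i, berhu (w i)) := by
      have key : ∀ (t : Finset (Fin d)),
          ConvexOn ℝ Set.univ (fun w : Fin d → ℝ => ∑ i ∈ t, berhu (w i)) := by
        intro t
        induction t using Finset.induction with
        | empty => simpa using convexOn_const (0:ℝ) convex_univ
        | insert a s hi ih =>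
          have hcoord : ConvexOn ℝ Set.univ (fun w : Fin d → ℝ => berhu (w a)) := by
            have := berhu_convex.comp_linearMap
              (LinearMap.proj a : (Fin d → ℝ) →ₗ[ℝ] ℝ)
            exact this
          have := hcoord.add ih
          simp only [Finset.sum_insert hi]
          exact this
      exact key Finset.univ
    exact this.congr (fun w _ => (hΘ w).symm)
  constructor
  · -- Θ ≤ F
    intro w
    rw [hΘ w, hF' w]
    apply Finset.sum_le_sum
    intro i _
    by_cases h : w i = 0
    · simp [h, berhu_zero]
    · have := berhu_le (w i) h
      rw [if_pos h]
      linarith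
  · -- envelope property
    intro g hg hgF
    -- main induction
    have main : ∀ (s : Finset (Fin d)) (w : Fin d → ℝ),
        (∀ i, i ∉ s → w i = 0 ∨ 1 ≤ |w i|) → g w ≤ Θ w := by
      intro s
      induction s using Finset.induction with
      | empty =>
        intro w hw
        have : Θ w = F w := by
          rw [hΘ w, hF' w]
          exact Finset.sum_congr rfl fun i _ => berhu_of_good (w i) (hw i (by simp))
        rw [this]; exact hgF w
      | insert a s hi ih =>
        intro w hw
        by_cases hgood : w a = 0 ∨ 1 ≤ |w a|
        · apply ih
          intro i his
          by_cases hia : i = a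
          · rw [hia]; exact hgood
          · exact hw i (by simp [his, hia])
        · push_neg at hgood
          obtain ⟨ha0, ha1⟩ := hgood
          set t := w a with hta
          have ht0 : t ≠ 0 := ha0
          have habs : 0 < |t| := abs_pos.2 ht0
          set c : ℝ := |t|
          have hc1 : c < 1 := ha1
          set w0 : Fin d → ℝ := Function.update w a 0 with hw0
          set w1 : Fin d → ℝ := Function.update w a (Real.sign t) with hw1
          have hsign : |Real.sign t| = 1 := by
            rcases lt_or_gt_of_ne ht0 with h | h
            · rw [Real.sign_of_neg h]; simp
            · rw [Real.sign_of_pos h]; simp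
          have hcombo : w = (1 - c) • w0 + c • w1 := by
            funext j
            by_cases hj : j = a
            · subst hj
              simp only [Pi.add_apply, Pi.smul_apply, hw0, hw1,
                Function.update_self, smul_eq_mul]
              rw [mul_zero, zero_add]
              rcases lt_or_gt_of_ne ht0 with h | h
              · rw [Real.sign_of_neg h]
                have hc : c = -t := abs_of_neg h
                rw [hc, ← hta]; ring
              · rw [Real.sign_of_pos h]
                have hc : c = t := abs_of_pos h
                rw [hc, ← hta]; ring
            · simp [hw0, hw1, Function.update_of_ne hj, smul_eq_mul]
              ring
          have hout : ∀ (v : Fin d → ℝ), (∀ i, i ∉ insert a s → w i = 0 ∨ 1 ≤ |w i|) → True :=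
            fun _ _ => trivial
          have hg0 : g w0 ≤ Θ w0 := by
            apply ih; intro i his
            by_cases hia : i = a
            · left; rw [hia]; simp [hw0]
            · rw [hw0, Function.update_of_ne hia]
              exact hw i (by simp [his, hia])
          have hg1 : g w1 ≤ Θ w1 := by
            apply ih; intro i his
            by_cases hia : i = a
            · right; rw [hia]; simp [hw1, hsign]
            · rw [hw1, Function.update_of_ne hia]
              exact hw i (by simp [his, hia])
          -- Θ values
          have hΘ0 : Θ w0 = Θ w - berhu t := by
            rw [hΘ, hΘ]
            have : ∑ i, berhu (w0 i)
                = ∑ i, berhu (w i) - berhu (w a) + berhu (0:ℝ) := by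
              rw [hw0]; exact sum_berhu_update w a 0
            rw [this, berhu_zero]; rw [← hta]; ring
          have hΘ1 : Θ w1 = Θ w - berhu t + 1 := by
            rw [hΘ, hΘ]
            have : ∑ i, berhu (w1 i)
                = ∑ i, berhu (w i) - berhu (w a) + berhu (Real.sign t) := by
              rw [hw1]; exact sum_berhu_update w a (Real.sign t)
            have hbs : berhu (Real.sign t) = 1 := by
              rw [berhu, if_pos (le_of_eq hsign), hsign]
            rw [this, hbs, ← hta]
          have hbt : berhu t = c := by
            rw [berhu, if_pos hc1.le]
          have hconv := hg.2 (Set.mem_univ w0) (Set.mem_univ w1)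
            (by linarith : (0:ℝ) ≤ 1 - c) habs.le (by ring : (1 - c) + c = 1)
          rw [← hcombo] at hconv
          calc g w ≤ (1 - c) * g w0 + c * g w1 := by simpa [smul_eq_mul] using hconv
            _ ≤ (1 - c) * Θ w0 + c * Θ w1 := by
                apply add_le_add
                · exact mul_le_mul_of_nonneg_left hg0 (by linarith)
                · exact mul_le_mul_of_nonneg_left hg1 habs.le
            _ = Θ w := by rw [hΘ0, hΘ1, hbt]; ring
    intro w
    exact main Finset.univ w (fun i hi => absurd (Finset.mem_univ i) hi)
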